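/- Let A and B be two distinct independent sets of an even-hole-free graph G, both of size at least k. Then A is TAR_k-reachable to B if and only if neither A nor B is a dominating set of G of size exactly k. -/

import Mathlib

open Finset

variable {V : Type*}

/-- `I` is an independent set of `G`. -/
def IsIndep (G : SimpleGraph V) (I : Finset V) : Prop :=
  ∀ u ∈ I, ∀ v ∈ I, ¬ G.Adj u v

/-- One token addition or removal between independent sets of size at least `k`. -/
def TarStep [DecidableEq V] (G : SimpleGraph V) (k : ℕ) (I J : Finset V) : Prop :=
  IsIndep G I ∧ IsIndep G J ∧ k ≤ I.card ∧ k ≤ J.card ∧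
    ∃ v : V, J = insert v I ∨ I = insert v J

/-- TAR-reachability with token lower bound `k`. -/
def TarReach [DecidableEq V] (G : SimpleGraph V) (k : ℕ) (I J : Finset V) : Prop :=
  Relation.ReflTransGen (TarStep G k) I J

/-- TAR-reachability inside the subgraph of `G` induced by `S`. -/
def TarReachOn [DecidableEq V] (G : SimpleGraph V) (S : Finset V) (k : ℕ)
    (I J : Finset V) : Prop :=
  Relation.ReflTransGen (fun I J => I ⊆ S ∧ J ⊆ S ∧ TarStep G k I J) I J

/-- `G` has an induced cycle on `n` vertices. -/
def HasInducedCycle (G : SimpleGraph V) (n : ℕ) : Prop :=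
  ∃ f : ZMod n → V, Function.Injective f ∧
    ∀ i j : ZMod n, G.Adj (f i) (f j) ↔ (i = j + 1 ∨ j = i + 1)

/-- `G` is even-hole-free: it has no induced even cycle. -/
def EvenHoleFree (G : SimpleGraph V) : Prop :=
  ∀ n : ℕ, 4 ≤ n → Even n → ¬ HasInducedCycle G n

/-- `D` is a dominating set of `G`. -/
def IsDominating (G : SimpleGraph V) (D : Finset V) : Prop :=
  ∀ v : V, v ∈ D ∨ ∃ u ∈ D, G.Adj u v


section Aux
open scoped Classical

variable {G : SimpleGraph V}

/-- A (not necessarily induced) cycle of length `n` within the vertex set `S`. -/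
def IsCycOn (G : SimpleGraph V) (S : Finset V) (n : ℕ) : Prop :=
  3 ≤ n ∧ ∃ f : ZMod n → V, Function.Injective f ∧ (∀ i, f i ∈ S) ∧
    ∀ i, G.Adj (f i) (f (i + 1))

lemma isCycOn_mono {S T : Finset V} (hST : S ⊆ T) {n : ℕ} (h : IsCycOn G S n) :
    IsCycOn G T n := by
  obtain ⟨h3, f, hinj, hmem, hadj⟩ := h
  exact ⟨h3, f, hinj, fun i => hST (hmem i), hadj⟩

lemma isCycOn_of_fn (G : SimpleGraph V) (S : Finset V) (n : ℕ) (h3 : 3 ≤ n)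
    (g : Fin n → V) (hinj : Function.Injective g) (hmem : ∀ i, g i ∈ S)
    (hadj : ∀ (i : ℕ) (h : i + 1 < n), G.Adj (g ⟨i, by omega⟩) (g ⟨i + 1, h⟩))
    (hclose : G.Adj (g ⟨n - 1, by omega⟩) (g ⟨0, by omega⟩)) :
    IsCycOn G S n := by
  haveI : NeZero n := ⟨by omega⟩
  haveI : Fact (1 < n) := ⟨by omega⟩
  refine ⟨h3, fun i => g ⟨i.val, ZMod.val_lt i⟩, ?_, fun i => hmem _, ?_⟩
  · intro a b hab
    have : a.val = b.val := congrArg Fin.val (hinj hab)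
    exact ZMod.val_injective n this
  · intro i
    have hv : (i + 1).val = (i.val + 1) % n := by
      rw [ZMod.val_add, ZMod.val_one]
    by_cases hc : i.val + 1 < n
    · have e : (i + 1).val = i.val + 1 := by rw [hv, Nat.mod_eq_of_lt hc]
      simp only [e]
      exact hadj i.val hc
    · have hlt := ZMod.val_lt i
      have e1 : i.val = n - 1 := by omega
      have e : (i + 1).val = 0 := by
        rw [hv, e1]
        simp [Nat.sub_add_cancel (by omega : 1 ≤ n)]
      simp only [e, e1]
      exact hclose

lemma pathext (S : Finset V) (hnc : ∀ n, ¬ IsCycOn G S n)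
    (hdeg : ∀ v ∈ S, 2 ≤ (S.filter (fun u => G.Adj v u)).card)
    (l : List V) (hl : l ≠ []) (hnd : l.Nodup) (hmem : ∀ v ∈ l, v ∈ S)
    (hch : l.Chain' G.Adj) :
    ∃ u, u ∈ S ∧ u ∉ l ∧ G.Adj (l.getLast hl) u := by
  set v := l.getLast hl with hv
  have hlen : 1 ≤ l.length := List.length_pos_iff.2 hl
  have hvget : v = l.get ⟨l.length - 1, by omega⟩ := List.getLast_eq_getElem hl
  have hvS : v ∈ S := hmem _ (List.getLast_mem hl)
  have claim : ∃ w, ∀ u ∈ l, G.Adj v u → u = w := by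
    refine ⟨if h2 : 2 ≤ l.length then l.get ⟨l.length - 2, by omega⟩ else v, ?_⟩
    intro u hu hadj
    obtain ⟨i, hiu⟩ := List.mem_iff_get.1 hu
    have hne : v ≠ u := G.ne_of_adj hadj
    have hi1 : i.val ≠ l.length - 1 := by
      intro h
      apply hne
      rw [hvget, ← hiu]
      congr 1
      exact Fin.ext h.symm
    have hilt := i.2
    by_cases h2 : i.val = l.length - 2
    · have h2' : 2 ≤ l.length := by omega
      rw [dif_pos h2', ← hiu]
      congr 1
      exact Fin.ext h2
    · -- i.val + 2 < l.length; build a cycle, contradiction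
      exfalso
      have hi3 : i.val + 2 < l.length := by omega
      set n := l.length - i.val with hn
      have h3 : 3 ≤ n := by omega
      apply hnc n
      have hginj : Function.Injective l.get := List.nodup_iff_injective_get.1 hnd
      apply isCycOn_of_fn G S n h3 (fun t => l.get ⟨i.val + t.val, by omega⟩)
      · intro a b hab
        have := hginj hab
        have : i.val + a.val = i.val + b.val := congrArg Fin.val this
        exact Fin.ext (by omega)
      · intro t; exact hmem _ (List.get_mem _ _)
      · intro t ht
        have hch' := List.isChain_iff_getElem.1 hch (i.val + t) (by omega)
        have e : i.val + (t + 1) = (i.val + t) + 1 := by omega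
        simp only [e]
        exact hch'
      · have e1 : i.val + (n - 1) = l.length - 1 := by omega
        have e2 : i.val + 0 = i.val := by omega
        simp only [e1, e2]
        rw [← hvget] at *
        rw [hiu]
        exact hadj
  obtain ⟨w, hw⟩ := claim
  by_contra hcon
  push_neg at hcon
  have hsub : S.filter (fun u => G.Adj v u) ⊆ {w} := by
    intro u hu
    rw [Finset.mem_filter] at hu
    rcases Classical.em (u ∈ l) with hul | hul
    · exact Finset.mem_singleton.2 (hw u hul hu.2)
    · exact absurd (hcon u hu.1 hul) (not_not.2 hu.2)
  have := Finset.card_le_card hsub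
  rw [Finset.card_singleton] at this
  have := hdeg v hvS
  omega

lemma growth (S : Finset V) (hnc : ∀ n, ¬ IsCycOn G S n)
    (hdeg : ∀ v ∈ S, 2 ≤ (S.filter (fun u => G.Adj v u)).card)
    (hS : S.Nonempty) :
    ∀ N : ℕ, ∃ l : List V, l ≠ [] ∧ l.Nodup ∧ (∀ v ∈ l, v ∈ S) ∧
      l.Chain' G.Adj ∧ N ≤ l.length := by
  intro N
  induction N with
  | zero =>
    obtain ⟨v, hvS⟩ := hS
    exact ⟨[v], by simp, by simp, by simpa, List.isChain_singleton v, by simp⟩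
  | succ N ih =>
    obtain ⟨l, h1, h2, h3, h4, h5⟩ := ih
    obtain ⟨u, huS, hul, hadj⟩ := pathext S hnc hdeg l h1 h2 h3 h4
    refine ⟨l ++ [u], by simp, ?_, ?_, ?_, by simp; omega⟩
    · rw [List.nodup_append]
      exact ⟨h2, by simp, fun a hal b hb hab => hul (by simp at hb; rw [← hb, ← hab]; exact hal)⟩
    · intro x hx
      rcases List.mem_append.1 hx with h | h
      · exact h3 x h
      · simpa using ((by simpa using h : x = u) ▸ huS)
    · rw [List.Chain', List.isChain_append]
      refine ⟨h4, List.isChain_singleton u, ?_⟩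
      intro x hx y hy
      rw [List.getLast?_eq_getLast h1] at hx
      simp at hx hy
      rw [← hx, ← hy]
      exact hadj

lemma no_cyc_of_min_degree_two (S : Finset V)
    (hdeg : ∀ v ∈ S, 2 ≤ (S.filter (fun u => G.Adj v u)).card)
    (hS : S.Nonempty) : ∃ n, IsCycOn G S n := by
  by_contra hnc
  push_neg at hnc
  obtain ⟨l, h1, h2, h3, h4, h5⟩ := growth S hnc hdeg hS (S.card + 1)
  have hsub : l.toFinset ⊆ S := fun x hx => h3 x (List.mem_toFinset.1 hx)
  have := Finset.card_le_card hsub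
  rw [List.toFinset_card_of_nodup h2] at this
  omega

lemma edge_bound [DecidableEq V] : ∀ (N : ℕ) (X Y : Finset V), X.card + Y.card ≤ N → Disjoint X Y →
    (∀ n, ¬ IsCycOn G (X ∪ Y) n) →
    (∑ y ∈ Y, (X.filter (fun x => G.Adj y x)).card) ≤ X.card + Y.card - 1 := by
  intro N
  induction N with
  | zero =>
    intro X Y hN _ _
    have hY : Y = ∅ := by rw [← Finset.card_eq_zero]; omega
    subst hY; simp
  | succ N ih =>
    intro X Y hN hd hnc
    rcases Y.eq_empty_or_nonempty with rfl | hYne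
    · simp
    rcases X.eq_empty_or_nonempty with rfl | hXne
    · simp
    have hX1 : 1 ≤ X.card := hXne.card_pos
    have hY1 : 1 ≤ Y.card := hYne.card_pos
    by_cases hy : ∃ y ∈ Y, (X.filter (fun x => G.Adj y x)).card ≤ 1
    · obtain ⟨y, hyY, hy1⟩ := hy
      have hce := Finset.card_erase_of_mem hyY
      have hrec := ih X (Y.erase y) (by omega)
        (hd.mono_right (Finset.erase_subset _ _))
        (fun n hc => hnc n (isCycOn_mono
          (Finset.union_subset_union_right (Finset.erase_subset _ _)) hc))
      rw [← Finset.add_sum_erase Y _ hyY]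
      omega
    by_cases hx : ∃ x ∈ X, (Y.filter (fun y => G.Adj x y)).card ≤ 1
    · obtain ⟨x, hxX, hx1⟩ := hx
      have hce := Finset.card_erase_of_mem hxX
      have hrec := ih (X.erase x) Y (by omega)
        (hd.mono_left (Finset.erase_subset _ _))
        (fun n hc => hnc n (isCycOn_mono
          (Finset.union_subset_union_left (Finset.erase_subset _ _)) hc))
      have hsplit : ∀ y ∈ Y, (X.filter (fun x' => G.Adj y x')).card
          = ((X.erase x).filter (fun x' => G.Adj y x')).card + (if G.Adj y x then 1 else 0) := by
        intro y _
        rw [Finset.filter_erase]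
        by_cases hadj : G.Adj y x
        · have hxm : x ∈ X.filter (fun x' => G.Adj y x') := Finset.mem_filter.2 ⟨hxX, hadj⟩
          rw [if_pos hadj, Finset.card_erase_of_mem hxm]
          have h1 : 1 ≤ (X.filter (fun x' => G.Adj y x')).card := Finset.card_pos.2 ⟨x, hxm⟩
          omega
        · rw [if_neg hadj, Finset.erase_eq_of_notMem
            (fun hmem => hadj (Finset.mem_filter.1 hmem).2)]
          simp
      rw [Finset.sum_congr rfl hsplit, Finset.sum_add_distrib]
      have hb : (∑ y ∈ Y, if G.Adj y x then 1 else 0)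
          = (Y.filter (fun y => G.Adj y x)).card := by
        rw [Finset.sum_boole]; simp
      have hcc : Y.filter (fun y => G.Adj y x) = Y.filter (fun y => G.Adj x y) := by
        apply Finset.filter_congr; intro y _; simp [G.adj_comm]
      rw [hb, hcc]
      omega
    · push_neg at hy hx
      exfalso
      have hdeg : ∀ v ∈ X ∪ Y, 2 ≤ ((X ∪ Y).filter (fun u => G.Adj v u)).card := by
        intro v hv
        rcases Finset.mem_union.1 hv with hvX | hvY
        · have h2 := hx v hvX
          have hsub : Y.filter (fun y => G.Adj v y) ⊆ (X ∪ Y).filter (fun u => G.Adj v u) := by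
            intro u hu
            rw [Finset.mem_filter] at hu ⊢
            exact ⟨Finset.mem_union_right _ hu.1, hu.2⟩
          have := Finset.card_le_card hsub
          omega
        · have h2 := hy v hvY
          have hsub : X.filter (fun x => G.Adj v x) ⊆ (X ∪ Y).filter (fun u => G.Adj v u) := by
            intro u hu
            rw [Finset.mem_filter] at hu ⊢
            exact ⟨Finset.mem_union_left _ hu.1, hu.2⟩
          have := Finset.card_le_card hsub
          omega
      obtain ⟨n, hcn⟩ := no_cyc_of_min_degree_two (X ∪ Y) hdeg
        (hYne.mono Finset.subset_union_right)
      exact hnc n hcn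

lemma cyc_false [DecidableEq V] (hG : EvenHoleFree G) (X Y : Finset V) (hd : Disjoint X Y)
    (hX : IsIndep G X) (hY : IsIndep G Y) (h : ∃ n, IsCycOn G (X ∪ Y) n) : False := by
  set n := Nat.find h with hn
  obtain ⟨h3, f, hinj, hmem, hadj⟩ : IsCycOn G (X ∪ Y) n := Nat.find_spec h
  haveI : NeZero n := ⟨by omega⟩
  haveI : Fact (1 < n) := ⟨by omega⟩
  have halt : ∀ i : ZMod n, (f i ∈ X) ↔ ¬ (f (i + 1) ∈ X) := by
    intro i
    have hadji := hadj i
    have h1 := hmem i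
    have h2 := hmem (i + 1)
    constructor
    · intro hiX h1X; exact hX _ hiX _ h1X hadji
    · intro hnX
      rcases Finset.mem_union.1 h1 with hh | hh
      · exact hh
      · exfalso
        rcases Finset.mem_union.1 h2 with h' | h'
        · exact hnX h'
        · exact hY _ hh _ h' hadji
  have hpar : ∀ m : ℕ, ((f (m : ZMod n) ∈ X) ↔ (f 0 ∈ X)) ↔ Even m := by
    intro m
    induction m with
    | zero => simp
    | succ m ih =>
      have e : ((m + 1 : ℕ) : ZMod n) = (m : ZMod n) + 1 := by push_cast; ring
      rw [e, Nat.even_add_one]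
      have := halt (m : ZMod n)
      tauto
  have heven : Even n := by
    have h0 := hpar n
    rw [ZMod.natCast_self] at h0
    exact h0.mp Iff.rfl
  have hind : ∀ i j : ZMod n, G.Adj (f i) (f j) → (i = j + 1 ∨ j = i + 1) := by
    intro i j hadjij
    by_contra hcon
    push_neg at hcon
    obtain ⟨hc1, hc2⟩ := hcon
    have hij : i ≠ j := by
      intro hh
      exact G.ne_of_adj hadjij (by rw [hh])
    set d := (j - i).val with hdd
    have hd0 : d ≠ 0 := by
      intro hh
      apply hij
      have : j - i = 0 := by
        have := (ZMod.val_eq_zero _).1 hh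
        exact this
      have := sub_eq_zero.1 this
      exact this.symm
    have hd1 : d ≠ 1 := by
      intro hh
      apply hc2
      have hji : j - i = ((d : ℕ) : ZMod n) := (ZMod.natCast_rightInverse _).symm
      rw [hh] at hji
      simp at hji
      rw [sub_eq_iff_eq_add] at hji
      rw [hji, add_comm]
    have hdn : d ≠ n - 1 := by
      intro hh
      apply hc1
      have hji : j - i = ((d : ℕ) : ZMod n) := (ZMod.natCast_rightInverse _).symm
      rw [hh] at hji
      have hneg : ((n - 1 : ℕ) : ZMod n) = -1 := by
        have h4 : ((n - 1 : ℕ) : ZMod n) + 1 = ((n : ℕ) : ZMod n) := by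
          rw [show (n : ℕ) = (n - 1) + 1 from by omega]
          push_cast
          ring
        rw [ZMod.natCast_self] at h4
        exact eq_neg_of_add_eq_zero_left h4
      rw [hneg, sub_eq_iff_eq_add] at hji
      rw [hji]; ring
    have hdlt : d < n := ZMod.val_lt _
    set m := d + 1 with hm
    have h3m : 3 ≤ m := by omega
    have hmn : m < n := by omega
    haveI : NeZero m := ⟨by omega⟩
    haveI : Fact (1 < m) := ⟨by omega⟩
    have hcyc : IsCycOn G (X ∪ Y) m := by
      refine ⟨h3m, fun t => f (i + ((t.val : ℕ) : ZMod n)), ?_, fun t => hmem _, ?_⟩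
      · intro a b hab
        have h5 := hinj hab
        have h6 : ((a.val : ℕ) : ZMod n) = ((b.val : ℕ) : ZMod n) := add_left_cancel h5
        have h7 := congrArg ZMod.val h6
        rw [ZMod.val_cast_of_lt (lt_trans (ZMod.val_lt a) hmn),
          ZMod.val_cast_of_lt (lt_trans (ZMod.val_lt b) hmn)] at h7
        exact ZMod.val_injective m h7
      · intro t
        have hv : (t + 1).val = (t.val + 1) % m := by rw [ZMod.val_add, ZMod.val_one]
        by_cases hc : t.val + 1 < m
        · have e : (t + 1).val = t.val + 1 := by rw [hv, Nat.mod_eq_of_lt hc]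
          have e2 : ((t.val + 1 : ℕ) : ZMod n) = ((t.val : ℕ) : ZMod n) + 1 := by
            push_cast; ring
          show G.Adj (f (i + (((t.val : ℕ)) : ZMod n))) (f (i + ((((t + 1).val : ℕ)) : ZMod n)))
          rw [e, e2, ← add_assoc]
          exact hadj _
        · have hvl := ZMod.val_lt t
          have e1 : t.val = m - 1 := by omega
          have e : (t + 1).val = 0 := by
            rw [hv, e1, Nat.sub_add_cancel (by omega : 1 ≤ m), Nat.mod_self]
          show G.Adj (f (i + (((t.val : ℕ)) : ZMod n))) (f (i + ((((t + 1).val : ℕ)) : ZMod n)))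
          rw [e, e1]
          have h8 : ((m - 1 : ℕ) : ZMod n) = j - i := by
            rw [show m - 1 = d from by omega]
            exact ZMod.natCast_rightInverse _
          rw [h8]
          simp only [Nat.cast_zero, add_zero]
          rw [show i + (j - i) = j from by ring]
          exact hadjij.symm
    exact Nat.find_min h hmn hcyc
  have hhas : HasInducedCycle G n := by
    refine ⟨f, hinj, fun i j => ⟨hind i j, ?_⟩⟩
    rintro (hh | hh)
    · rw [hh]; exact (hadj j).symm
    · rw [hh]; exact hadj i
  have h4n : 4 ≤ n := by obtain ⟨t, ht⟩ := id heven; omega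
  exact hG n h4n heven hhas

lemma exists_low_deg [DecidableEq V] (hG : EvenHoleFree G) (X Y : Finset V) (hd : Disjoint X Y)
    (hX : IsIndep G X) (hY : IsIndep G Y) (hcard : X.card ≤ Y.card) (hYne : Y.Nonempty) :
    ∃ y ∈ Y, (X.filter (fun x => G.Adj y x)).card ≤ 1 := by
  by_contra hcon
  push_neg at hcon
  have hnc : ∀ n, ¬ IsCycOn G (X ∪ Y) n := fun n hc => cyc_false hG X Y hd hX hY ⟨n, hc⟩
  have hbound := edge_bound (X.card + Y.card) X Y le_rfl hd hnc
  have hlow : Y.card • 2 ≤ ∑ y ∈ Y, (X.filter (fun x => G.Adj y x)).card :=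
    Finset.card_nsmul_le_sum _ _ _ (fun y hy => hcon y hy)
  have hY1 : 1 ≤ Y.card := hYne.card_pos
  rw [smul_eq_mul] at hlow
  omega
end Aux

section Recon
open scoped Classical

variable [DecidableEq V] {G : SimpleGraph V} {k : ℕ}

lemma isIndep_mono {A B : Finset V} (h : IsIndep G A) (hs : B ⊆ A) : IsIndep G B :=
  fun u hu v hv => h u (hs hu) v (hs hv)

lemma tarStep_symm {I J : Finset V} (h : TarStep G k I J) : TarStep G k J I := by
  obtain ⟨h1, h2, h3, h4, v, h5 | h5⟩ := h
  exacts [⟨h2, h1, h4, h3, v, Or.inr h5⟩, ⟨h2, h1, h4, h3, v, Or.inl h5⟩]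

lemma tarReach_symm {I J : Finset V} (h : TarReach G k I J) : TarReach G k J I :=
  @Std.Symm.symm _ _ (@Relation.ReflTransGen.symmetric _ _ ⟨fun _ _ h => tarStep_symm h⟩) _ _ h

lemma tarStep_erase {A : Finset V} (hA : IsIndep G A) {a : V} (ha : a ∈ A)
    (hk : k ≤ (A.erase a).card) : TarStep G k A (A.erase a) :=
  ⟨hA, isIndep_mono hA (Finset.erase_subset _ _),
    le_trans hk (Finset.card_le_card (Finset.erase_subset _ _)), hk, a,
    Or.inr (Finset.insert_erase ha).symm⟩

lemma tarStep_insert {A : Finset V} {v : V} (hA : IsIndep G A)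
    (hv : IsIndep G (insert v A)) (hk : k ≤ A.card) : TarStep G k A (insert v A) :=
  ⟨hA, hv, hk, le_trans hk (Finset.card_le_card (Finset.subset_insert _ _)), v, Or.inl rfl⟩

/-- Token-jump connectivity for independent sets of size `k+1`, by induction on
the size of the difference. -/
lemma tj_reach (hG : EvenHoleFree G) :
    ∀ (d : ℕ) (A B : Finset V), (A \ B).card = d → IsIndep G A → IsIndep G B →
      A.card = k + 1 → B.card = k + 1 → TarReach G k A B := by
  intro d
  induction d using Nat.strong_induction_on with
  | _ d ih =>
  intro A B hd hA hB hcA hcB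
  rcases Nat.eq_zero_or_pos d with rfl | hdpos
  · have hAB : A = B := Finset.eq_of_subset_of_card_le
      (Finset.sdiff_eq_empty_iff_subset.1 (Finset.card_eq_zero.1 hd)) (by omega)
    rw [hAB]
    exact Relation.ReflTransGen.refl
  · set X := A \ B with hXdef
    set Y := B \ A with hYdef
    have hdisj : Disjoint X Y := disjoint_sdiff_sdiff
    have hXY : X.card = Y.card := Finset.card_sdiff_comm (by omega)
    have hYne : Y.Nonempty := by rw [← Finset.card_pos, ← hXY]; omega
    have hXne : X.Nonempty := by rw [← Finset.card_pos]; omega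
    obtain ⟨y, hyY, hy1⟩ := exists_low_deg hG X Y hdisj
      (isIndep_mono hA Finset.sdiff_subset) (isIndep_mono hB Finset.sdiff_subset)
      (le_of_eq hXY) hYne
    have ha : ∃ a ∈ X, ∀ x ∈ X, G.Adj y x → x = a := by
      rcases (X.filter (fun x => G.Adj y x)).eq_empty_or_nonempty with hemp | ⟨a, haf⟩
      · obtain ⟨a, haX⟩ := hXne
        refine ⟨a, haX, fun x hx hadj => absurd (Finset.mem_filter.2 ⟨hx, hadj⟩) ?_⟩
        rw [hemp]; simp
      · have haX := (Finset.mem_filter.1 haf).1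
        refine ⟨a, haX, fun x hx hadj => ?_⟩
        exact Finset.card_le_one.1 hy1 x (Finset.mem_filter.2 ⟨hx, hadj⟩) a haf
    obtain ⟨a, haX, hauniq⟩ := ha
    have haA : a ∈ A := (Finset.mem_sdiff.1 haX).1
    have hyB : y ∈ B := (Finset.mem_sdiff.1 hyY).1
    have hyA : y ∉ A := (Finset.mem_sdiff.1 hyY).2
    have hyAnbr : ∀ u ∈ A, G.Adj y u → u = a := by
      intro u hu hadj
      by_cases huB : u ∈ B
      · exact absurd hadj (hB y hyB u huB)
      · exact hauniq u (Finset.mem_sdiff.2 ⟨hu, huB⟩) hadj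
    set A' := insert y (A.erase a) with hA'def
    have hyAe : y ∉ A.erase a := fun hc => hyA (Finset.mem_of_mem_erase hc)
    have hindA' : IsIndep G A' := by
      intro u hu w hw
      rcases Finset.mem_insert.1 hu with rfl | hu' <;>
        rcases Finset.mem_insert.1 hw with rfl | hw'
      · intro hadj; exact G.ne_of_adj hadj rfl
      · intro hadj
        exact Finset.ne_of_mem_erase hw' (hyAnbr w (Finset.mem_of_mem_erase hw') hadj)
      · intro hadj
        exact Finset.ne_of_mem_erase hu' (hyAnbr u (Finset.mem_of_mem_erase hu') hadj.symm)
      · exact hA u (Finset.mem_of_mem_erase hu') w (Finset.mem_of_mem_erase hw')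
    have hcae : (A.erase a).card = k := by rw [Finset.card_erase_of_mem haA]; omega
    have hcA' : A'.card = k + 1 := by
      rw [hA'def, Finset.card_insert_of_notMem hyAe]; omega
    have s1 : TarStep G k A (A.erase a) := tarStep_erase hA haA (by omega)
    have s2 : TarStep G k (A.erase a) A' :=
      tarStep_insert (isIndep_mono hA (Finset.erase_subset _ _)) hindA' (by omega)
    have hA'B : (A' \ B).card = d - 1 := by
      have heq : A' \ B = (A \ B).erase a := by
        ext u
        simp only [hA'def, Finset.mem_sdiff, Finset.mem_insert, Finset.mem_erase]
        constructor
        · rintro ⟨h1 | ⟨h1, h2⟩, h3⟩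
          · exact absurd (h1 ▸ hyB) h3
          · exact ⟨h1, h2, h3⟩
        · rintro ⟨h1, h2, h3⟩
          exact ⟨Or.inr ⟨h1, h2⟩, h3⟩
      rw [heq, Finset.card_erase_of_mem haX, hd]
    have hrec := ih (d - 1) (by omega) A' B hA'B hindA' hB hcA' hcB
    exact Relation.ReflTransGen.head s1 (Relation.ReflTransGen.head s2 hrec)

lemma descend (hG : EvenHoleFree G) :
    ∀ (c : ℕ) (A : Finset V), A.card = c → IsIndep G A → k + 1 ≤ c →
      ∃ A', TarReach G k A A' ∧ IsIndep G A' ∧ A'.card = k + 1 := by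
  intro c
  induction c using Nat.strong_induction_on with
  | _ c ih =>
  intro A hc hA hkc
  rcases eq_or_lt_of_le hkc with heq | hlt
  · exact ⟨A, Relation.ReflTransGen.refl, hA, by omega⟩
  · obtain ⟨a, haA⟩ := Finset.card_pos.1 (by omega : 0 < A.card)
    have hce : (A.erase a).card = c - 1 := by rw [Finset.card_erase_of_mem haA]; omega
    have s : TarStep G k A (A.erase a) :=
      tarStep_erase hA haA (by rw [Finset.card_erase_of_mem haA]; omega)
    obtain ⟨A', hr, hi, hcard⟩ := ih (c - 1) (by omega) (A.erase a) hce
      (isIndep_mono hA (Finset.erase_subset _ _)) (by omega)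
    exact ⟨A', Relation.ReflTransGen.head s hr, hi, hcard⟩

lemma reach_succ (hG : EvenHoleFree G) {A : Finset V} (hA : IsIndep G A)
    (hk : k ≤ A.card) (hnd : ¬ (IsDominating G A ∧ A.card = k)) :
    ∃ A', TarReach G k A A' ∧ IsIndep G A' ∧ A'.card = k + 1 := by
  rcases eq_or_lt_of_le hk with heq | hlt
  · have hdom : ¬ IsDominating G A := fun h => hnd ⟨h, heq.symm⟩
    rw [IsDominating] at hdom
    push_neg at hdom
    obtain ⟨v, hvA, hvnbr⟩ := hdom
    have hind : IsIndep G (insert v A) := by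
      intro u hu w hw hadj
      rcases Finset.mem_insert.1 hu with rfl | hu' <;>
        rcases Finset.mem_insert.1 hw with rfl | hw'
      · exact G.ne_of_adj hadj rfl
      · exact hvnbr w hw' hadj.symm
      · exact hvnbr u hu' hadj
      · exact hA u hu' w hw' hadj
    exact ⟨insert v A, Relation.ReflTransGen.single (tarStep_insert hA hind hk), hind,
      by rw [Finset.card_insert_of_notMem hvA]; omega⟩
  · exact descend hG A.card A rfl hA (by omega)

lemma frozen_step {A J : Finset V} (hdom : IsDominating G A) (hcard : A.card = k)
    (h : TarStep G k A J) : J = A := by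
  obtain ⟨hIA, hIJ, hk1, hk2, v, hc | hc⟩ := h
  · by_cases hvA : v ∈ A
    · rw [hc, Finset.insert_eq_self.2 hvA]
    · rcases hdom v with hv | ⟨u, huA, hadj⟩
      · exact absurd hv hvA
      · exact absurd hadj (hIJ u (hc ▸ Finset.mem_insert_of_mem huA) v
          (hc ▸ Finset.mem_insert_self v A))
  · by_cases hvJ : v ∈ J
    · rw [hc, Finset.insert_eq_self.2 hvJ]
    · have hcc := Finset.card_insert_of_notMem hvJ
      rw [← hc] at hcc
      omega

lemma frozen_reach {A J : Finset V} (hdom : IsDominating G A) (hcard : A.card = k)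
    (h : TarReach G k A J) : J = A := by
  induction h with
  | refl => rfl
  | tail hab hbc ih => exact frozen_step hdom hcard (ih ▸ hbc)

end Recon

/-- In an even-hole-free graph, two distinct independent sets of size at least
`k` are TAR_k-reachable from each other iff neither is a dominating set of
size exactly `k`. -/
theorem even_hole_free_tar [DecidableEq V] (G : SimpleGraph V)
    (hG : EvenHoleFree G) (A B : Finset V) (hne : A ≠ B)
    (hA : IsIndep G A) (hB : IsIndep G B) (k : ℕ)
    (hkA : k ≤ A.card) (hkB : k ≤ B.card) :
    TarReach G k A B ↔
      ¬ (IsDominating G A ∧ A.card = k) ∧ ¬ (IsDominating G B ∧ B.card = k) := by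
  constructor
  · intro hreach
    constructor
    · rintro ⟨hdom, hcard⟩
      exact hne (frozen_reach hdom hcard hreach).symm
    · rintro ⟨hdom, hcard⟩
      exact hne (frozen_reach hdom hcard (tarReach_symm hreach))
  · rintro ⟨hndA, hndB⟩
    obtain ⟨A', hrA, hiA, hcA⟩ := reach_succ hG hA hkA hndA
    obtain ⟨B', hrB, hiB, hcB⟩ := reach_succ hG hB hkB hndB
    have htj := tj_reach hG (A' \ B').card A' B' rfl hiA hiB hcA hcB
    exact (hrA.trans htj).trans (tarReach_symm hrB)
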